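/- Let φ and (a_j) be as in the context. For every integer n ≥ 1, the set F_φ^{(a_n)} := {x ∈ (0,1) irrational : u_k(x) ≤ φ(k) for all k ≤ a_n} has Lebesgue measure μ(F_φ^{(a_n)}) < ∏_{j=1}^{n} (1 − 1/(3(φ(a_j)+2))). -/

import Mathlib

open MeasureTheory

/-- The Gauss map `y ↦ {1/y}`. -/
noncomputable def gaussMap (y : ℝ) : ℝ := Int.fract y⁻¹

/-- For an irrational `x ∈ (0,1)`, `cfCoeff x n` is the `n`-th coefficient `u_n(x)`
(`n ≥ 1`) of the continued fraction expansion `x = [0; u_1(x), u_2(x), …]`. -/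
noncomputable def cfCoeff (x : ℝ) (n : ℕ) : ℕ := ⌊(gaussMap^[n - 1] x)⁻¹⌋₊

namespace CfAux

/-- The key set. -/
def S (m : ℕ) (ψ : ℕ → ℕ∞) : Set ℝ :=
  {y | y ∈ Set.Ioo (0:ℝ) 1 ∧ Irrational y ∧
    ∀ k, 1 ≤ k → k ≤ m → (cfCoeff y k : ℕ∞) ≤ ψ k}

noncomputable def fac (M : ℕ∞) : ENNReal :=
  if M = ⊤ then 1 else ENNReal.ofReal ((M.toNat : ℝ) / (M.toNat + 1))

lemma measurable_gaussMap : Measurable gaussMap :=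
  measurable_fract.comp measurable_inv

lemma measurable_cfCoeff (k : ℕ) : Measurable fun y => cfCoeff y k :=
  Nat.measurable_floor.comp ((measurable_gaussMap.iterate (k-1)).inv)

lemma measurableSet_S (m : ℕ) (ψ : ℕ → ℕ∞) : MeasurableSet (S m ψ) := by
  have h1 : MeasurableSet {y : ℝ | Irrational y} := by
    have : {y : ℝ | Irrational y} = (Set.range ((↑) : ℚ → ℝ))ᶜ := rfl
    rw [this]
    exact (Set.countable_range _).measurableSet.compl
  have h2 : ∀ k : ℕ, MeasurableSet {y : ℝ | (cfCoeff y k : ℕ∞) ≤ ψ k} := fun k =>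
    (measurable_cfCoeff k) (MeasurableSet.of_discrete (s := {c : ℕ | (c : ℕ∞) ≤ ψ k}))
  have : S m ψ = (Set.Ioo (0:ℝ) 1) ∩ ({y : ℝ | Irrational y} ∩
      ⋂ k ∈ Set.Icc 1 m, {y : ℝ | (cfCoeff y k : ℕ∞) ≤ ψ k}) := by
    ext y
    simp only [S, Set.mem_setOf_eq, Set.mem_inter_iff, Set.mem_iInter, Set.mem_Icc]
    constructor
    · rintro ⟨h1, h2, h3⟩; exact ⟨h1, h2, fun k hk => h3 k hk.1 hk.2⟩
    · rintro ⟨h1, h2, h3⟩; exact ⟨h1, h2, fun k hk1 hk2 => h3 k ⟨hk1, hk2⟩⟩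
  rw [this]
  exact measurableSet_Ioo.inter (h1.inter (MeasurableSet.biInter (Set.to_countable _)
    fun k _ => h2 k))

end CfAux

section P2
open CfAux

variable {y z : ℝ} {c : ℕ}

lemma irrational_gaussMap (h : Irrational y) : Irrational (gaussMap y) := by
  have h1 : Irrational y⁻¹ := h.inv
  have : gaussMap y = y⁻¹ - (⌊y⁻¹⌋ : ℝ) := rfl
  rw [this]
  exact h1.sub_intCast _

lemma gaussMap_mem_Ioo (hy : y ∈ Set.Ioo (0:ℝ) 1) (h : Irrational y) :
    gaussMap y ∈ Set.Ioo (0:ℝ) 1 := by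
  refine ⟨?_, Int.fract_lt_one _⟩
  rcases lt_or_eq_of_le (Int.fract_nonneg y⁻¹) with h' | h'
  · exact h'
  · exfalso
    have : Irrational (gaussMap y) := irrational_gaussMap h
    rw [show gaussMap y = Int.fract y⁻¹ from rfl, ← h'] at this
    exact this ⟨0, by norm_num⟩

lemma cfCoeff_one_eq (y : ℝ) : cfCoeff y 1 = ⌊y⁻¹⌋₊ := rfl

lemma cfCoeff_succ (y : ℝ) (k : ℕ) (hk : 1 ≤ k) :
    cfCoeff y (k + 1) = cfCoeff (gaussMap y) k := by
  obtain ⟨m, rfl⟩ := Nat.exists_eq_add_of_le hk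
  show ⌊(gaussMap^[1 + m + 1 - 1] y)⁻¹⌋₊ = ⌊(gaussMap^[1 + m - 1] (gaussMap y))⁻¹⌋₊
  congr 2
  simp only [Nat.add_sub_cancel, show 1 + m - 1 = m from by omega,
    show 1 + m = m + 1 from by omega]
  rw [Function.iterate_succ_apply]

/-- Forward: decompose y via its first coefficient. -/
lemma exists_decomp (hy : y ∈ Set.Ioo (0:ℝ) 1) (h : Irrational y) :
    1 ≤ cfCoeff y 1 ∧ y = ((cfCoeff y 1 : ℝ) + gaussMap y)⁻¹ := by
  have hy0 : (0:ℝ) < y := hy.1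
  have hinv : 1 < y⁻¹ := (one_lt_inv₀ hy0).mpr hy.2
  have h1 : 1 ≤ cfCoeff y 1 := by
    rw [cfCoeff_one_eq]
    exact Nat.one_le_floor_iff _ |>.mpr hinv.le
  refine ⟨h1, ?_⟩
  have hfl : ((⌊y⁻¹⌋₊ : ℝ)) = (⌊y⁻¹⌋ : ℝ) := by
    rw [← Int.cast_natCast, Int.natCast_floor_eq_floor (by positivity)]
  have : (cfCoeff y 1 : ℝ) + gaussMap y = y⁻¹ := by
    rw [cfCoeff_one_eq, hfl]
    show (⌊y⁻¹⌋ : ℝ) + Int.fract y⁻¹ = y⁻¹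
    exact Int.floor_add_fract _
  rw [this, inv_inv]

/-- Backward: the map z ↦ (c+z)⁻¹. -/
lemma decomp_props (hc : 1 ≤ c) (hz : z ∈ Set.Ioo (0:ℝ) 1) (hzi : Irrational z) :
    ((c:ℝ) + z)⁻¹ ∈ Set.Ioo (0:ℝ) 1 ∧ Irrational ((c:ℝ) + z)⁻¹ ∧
    gaussMap ((c:ℝ) + z)⁻¹ = z ∧ cfCoeff ((c:ℝ) + z)⁻¹ 1 = c := by
  have hc1 : (1:ℝ) ≤ c := by exact_mod_cast hc
  have hcz : (1:ℝ) < (c:ℝ) + z := by nlinarith [hz.1]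
  have hcz0 : (0:ℝ) < (c:ℝ) + z := by linarith
  have hmem : ((c:ℝ) + z)⁻¹ ∈ Set.Ioo (0:ℝ) 1 := by
    constructor
    · positivity
    · exact inv_lt_one_of_one_lt₀ hcz
  have hirr : Irrational ((c:ℝ) + z)⁻¹ := by
    have : Irrational ((c:ℝ) + z) := by
      have := hzi.natCast_add c
      simpa using this
    exact this.inv
  have hinv : (((c:ℝ) + z)⁻¹)⁻¹ = (c:ℝ) + z := inv_inv _
  have hg : gaussMap ((c:ℝ) + z)⁻¹ = z := by
    show Int.fract (((c:ℝ) + z)⁻¹)⁻¹ = z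
    rw [hinv]
    have : ((c:ℕ):ℝ) + z = ((c:ℤ):ℝ) + z := by push_cast; ring
    rw [this, Int.fract_intCast_add, Int.fract_eq_self.mpr ⟨hz.1.le, hz.2⟩]
  have hcf : cfCoeff ((c:ℝ) + z)⁻¹ 1 = c := by
    rw [cfCoeff_one_eq, hinv]
    rw [Nat.floor_eq_iff (by positivity)]
    constructor
    · nlinarith [hz.1]
    · push_cast; nlinarith [hz.2]
  exact ⟨hmem, hirr, hg, hcf⟩

end P2

section P3
open CfAux

/-- 1-D lintegral change of variables. -/
lemma lint_image {s : Set ℝ} {f f' : ℝ → ℝ} (hs : MeasurableSet s)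
    (hf' : ∀ x ∈ s, HasDerivWithinAt f (f' x) s x) (hf : Set.InjOn f s) (g : ℝ → ENNReal) :
    ∫⁻ x in f '' s, g x = ∫⁻ x in s, ENNReal.ofReal |f' x| * g (f x) := by
  simpa only [ContinuousLinearMap.det_toSpanSingleton] using
    lintegral_image_eq_lintegral_abs_det_fderiv_mul volume hs
      (fun x hx => (hf' x hx).hasFDerivWithinAt) hf g

noncomputable def lam (t : ℝ) (c : ℕ) : ℝ := (1+t)/(((c:ℝ)+t)*((c:ℝ)+t+1))

lemma lam_nonneg {t : ℝ} (ht : 0 ≤ t) (c : ℕ) : 0 ≤ lam t c := by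
  unfold lam; positivity

lemma sum_lam_eq {t : ℝ} (ht : 0 ≤ t) (M : ℕ) :
    ∑ c ∈ Finset.Icc 1 M, lam t c = 1 - (1+t)/((M:ℝ)+1+t) := by
  have h : ∀ i : ℕ, lam t (1+i) =
      (1+t)/((i:ℝ)+1+t) - (1+t)/((((i+1:ℕ)):ℝ)+1+t) := by
    intro i
    have h1 : ((i:ℝ)+1+t) > 0 := by positivity
    have h2 : ((i:ℝ)+1+1+t) > 0 := by positivity
    unfold lam
    push_cast
    rw [div_sub_div _ _ (ne_of_gt h1) (ne_of_gt h2)]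
    rw [div_eq_div_iff (by positivity) (by positivity)]
    ring
  rw [← Finset.Ico_add_one_right_eq_Icc, Finset.sum_Ico_eq_sum_range]
  simp only [Nat.add_sub_cancel, Nat.succ_sub_one]
  rw [Finset.sum_congr rfl (fun i _ => h i)]
  rw [Finset.sum_range_sub' (fun i => (1+t)/((i:ℝ)+1+t))]
  push_cast
  have : (0:ℝ)+1+t = 1+t := by ring
  rw [this, div_self (by positivity)]

lemma sum_lam_le {t : ℝ} (ht : 0 ≤ t) (M : ℕ) :
    ∑ c ∈ Finset.Icc 1 M, lam t c ≤ (M:ℝ)/((M:ℝ)+1) := by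
  rw [sum_lam_eq ht]
  have h1 : (0:ℝ) < (M:ℝ)+1 := by positivity
  have h2 : (0:ℝ) < (M:ℝ)+1+t := by positivity
  have key : 1/((M:ℝ)+1) ≤ (1+t)/((M:ℝ)+1+t) := by
    rw [div_le_div_iff₀ h1 h2]
    nlinarith [Nat.cast_nonneg (α := ℝ) M]
  have hM : (M:ℝ)/((M:ℝ)+1) = 1 - 1/((M:ℝ)+1) := by
    field_simp
    ring
  rw [hM]
  linarith

lemma sum_lam_le_one {t : ℝ} (ht : 0 ≤ t) (M : ℕ) :
    ∑ c ∈ Finset.Icc 1 M, lam t c ≤ 1 := by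
  refine (sum_lam_le ht M).trans ?_
  rw [div_le_one (by positivity)]
  linarith

/-- The base integral computation. -/
lemma lintegral_H_Ioo {t : ℝ} (ht : t ∈ Set.Icc (0:ℝ) 1) :
    ∫⁻ y in Set.Ioo (0:ℝ) 1, ENNReal.ofReal ((1+t)/(1+t*y)^2) = 1 := by
  obtain ⟨ht0, ht1⟩ := ht
  set g : ℝ → ℝ := fun y => (1+t)/(1+t*y)^2 with hg
  have hpos : ∀ y ∈ Set.Icc (0:ℝ) 1, (0:ℝ) < 1 + t*y := by
    intro y hy
    nlinarith [hy.1, hy.2]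
  have hcont : ContinuousOn g (Set.Icc (0:ℝ) 1) := by
    apply ContinuousOn.div continuousOn_const
    · fun_prop
    · intro y hy
      exact pow_ne_zero 2 (ne_of_gt (hpos y hy))
  have hderiv : ∀ y ∈ Set.uIcc (0:ℝ) 1,
      HasDerivAt (fun y => (1+t)*y/(1+t*y)) (g y) y := by
    intro y hy
    rw [Set.uIcc_of_le (by norm_num : (0:ℝ) ≤ 1)] at hy
    have hne : 1 + t*y ≠ 0 := ne_of_gt (hpos y hy)
    have h1 : HasDerivAt (fun y : ℝ => (1+t)*y) (1+t) y := by
      simpa using (hasDerivAt_id y).const_mul (1+t)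
    have h2 : HasDerivAt (fun y : ℝ => 1+t*y) t y := by
      simpa using ((hasDerivAt_id y).const_mul t).const_add 1
    have := h1.div h2 hne
    refine this.congr_deriv ?_
    rw [hg]
    field_simp
    ring
  have hii : IntervalIntegrable g MeasureTheory.volume 0 1 := by
    apply ContinuousOn.intervalIntegrable
    rwa [Set.uIcc_of_le (by norm_num : (0:ℝ) ≤ 1)]
  have hint : ∫ y in (0:ℝ)..1, g y = 1 := by
    rw [intervalIntegral.integral_eq_sub_of_hasDerivAt hderiv hii]
    simp [div_self (show (1:ℝ)+t*1 ≠ 0 by nlinarith)]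
    exact (by nlinarith : (1:ℝ)+t ≠ 0)
  have heq : ∫⁻ y in Set.Ioo (0:ℝ) 1, ENNReal.ofReal (g y) =
      ∫⁻ y in Set.Ioc (0:ℝ) 1, ENNReal.ofReal (g y) := by
    apply MeasureTheory.setLIntegral_congr
    exact MeasureTheory.Ioo_ae_eq_Ioc
  rw [heq]
  have hInt : MeasureTheory.IntegrableOn g (Set.Ioc (0:ℝ) 1) := by
    apply (hcont.integrableOn_Icc).mono_set Set.Ioc_subset_Icc_self
  rw [← MeasureTheory.ofReal_integral_eq_lintegral_ofReal hInt]
  · rw [← intervalIntegral.integral_of_le (by norm_num : (0:ℝ) ≤ 1)] at *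
    rw [hint]
    simp
  · apply Filter.Eventually.of_forall
    intro y
    have : (0:ℝ) ≤ g y := by
      rw [hg]; positivity
    exact this

end P3

section P4
open CfAux MeasureTheory

noncomputable def Hd (t : ℝ) (y : ℝ) : ENNReal := ENNReal.ofReal ((1+t)/(1+t*y)^2)

lemma measurable_Hd (t : ℝ) : Measurable (Hd t) := by
  apply Measurable.ennreal_ofReal
  fun_prop

lemma S_subset_Ioo (m : ℕ) (ψ : ℕ → ℕ∞) : S m ψ ⊆ Set.Ioo (0:ℝ) 1 :=
  fun _ h => h.1

lemma S_decomp (m : ℕ) (ψ : ℕ → ℕ∞) :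
    S (m+1) ψ ⊆ ⋃ c : ℕ, (if 1 ≤ c ∧ (c : ℕ∞) ≤ ψ 1 then
      (fun z : ℝ => ((c:ℝ) + z)⁻¹) '' S m (fun k => ψ (k+1)) else ∅) := by
  rintro y ⟨hy, hirr, hcf⟩
  set c := cfCoeff y 1 with hc
  obtain ⟨hc1, hy_eq⟩ := exists_decomp hy hirr
  have hcle : (c : ℕ∞) ≤ ψ 1 := hcf 1 le_rfl (by omega)
  have hzmem : gaussMap y ∈ Set.Ioo (0:ℝ) 1 := gaussMap_mem_Ioo hy hirr
  have hzirr : Irrational (gaussMap y) := irrational_gaussMap hirr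
  have hzS : gaussMap y ∈ S m (fun k => ψ (k+1)) := by
    refine ⟨hzmem, hzirr, fun k hk1 hkm => ?_⟩
    rw [← cfCoeff_succ y k hk1]
    exact hcf (k+1) (by omega) (by omega)
  refine Set.mem_iUnion.mpr ⟨c, ?_⟩
  rw [if_pos ⟨hc1, hcle⟩]
  exact ⟨gaussMap y, hzS, hy_eq.symm⟩

/-- Key step: the lintegral of `Hd t` over the image of `S` under `z ↦ (c+z)⁻¹`. -/
lemma step_c (m : ℕ) (ψ' : ℕ → ℕ∞) {t : ℝ} (ht : t ∈ Set.Icc (0:ℝ) 1)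
    {c : ℕ} (hc : 1 ≤ c)
    (IH : ∀ t' ∈ Set.Icc (0:ℝ) 1,
      ∫⁻ y in S m ψ', Hd t' y ≤ ∏ k ∈ Finset.Icc 1 m, fac (ψ' k)) :
    ∫⁻ y in (fun z : ℝ => ((c:ℝ) + z)⁻¹) '' S m ψ', Hd t y ≤
      ENNReal.ofReal (lam t c) * ∏ k ∈ Finset.Icc 1 m, fac (ψ' k) := by
  obtain ⟨ht0, ht1⟩ := ht
  have hc1 : (1:ℝ) ≤ c := by exact_mod_cast hc
  set t' : ℝ := ((c:ℝ) + t)⁻¹ with ht'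
  have hct : (0:ℝ) < (c:ℝ) + t := by linarith
  have ht'mem : t' ∈ Set.Icc (0:ℝ) 1 := by
    constructor
    · positivity
    · rw [ht']
      apply inv_le_one_of_one_le₀
      linarith
  have hderiv : ∀ z ∈ S m ψ', HasDerivWithinAt (fun z : ℝ => ((c:ℝ) + z)⁻¹)
      (-1/((c:ℝ) + z)^2) (S m ψ') z := by
    intro z hz
    have hz0 : (0:ℝ) < z := hz.1.1
    have hne : (c:ℝ) + z ≠ 0 := by positivity
    have h1 : HasDerivAt (fun z : ℝ => (c:ℝ) + z) 1 z := by
      simpa using (hasDerivAt_id z).const_add (c:ℝ)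
    exact (h1.inv hne).hasDerivWithinAt
  have hinj : Set.InjOn (fun z : ℝ => ((c:ℝ) + z)⁻¹) (S m ψ') := by
    intro z1 h1 z2 h2 h
    have := inv_inj.mp h
    linarith [congrArg id this]
  rw [lint_image (measurableSet_S m ψ') hderiv hinj (Hd t)]
  have hptw : ∀ z ∈ S m ψ',
      ENNReal.ofReal |(-1/((c:ℝ) + z)^2)| * Hd t (((c:ℝ) + z)⁻¹) =
      ENNReal.ofReal (lam t c) * Hd t' z := by
    intro z hz
    have hz0 : (0:ℝ) < z := hz.1.1
    have hz1 : z < 1 := hz.1.2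
    have hcz : (0:ℝ) < (c:ℝ) + z := by positivity
    have habs : |(-1/((c:ℝ) + z)^2)| = (((c:ℝ) + z)^2)⁻¹ := by
      rw [abs_div, abs_neg, abs_one, abs_of_pos (by positivity : (0:ℝ) < ((c:ℝ)+z)^2),
        one_div]
    rw [habs]
    unfold Hd
    rw [← ENNReal.ofReal_mul (by positivity), ← ENNReal.ofReal_mul (lam_nonneg ht0 c)]
    congr 1
    have hd1 : (0:ℝ) < 1 + t * ((c:ℝ) + z)⁻¹ := by positivity
    have hd2 : (0:ℝ) < 1 + t' * z := by positivity
    have hct1 : (0:ℝ) < (c:ℝ) + t + 1 := by linarith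
    have hctz : (0:ℝ) < (c:ℝ) + t + z := by linarith
    unfold lam
    rw [ht']
    field_simp
    ring
  rw [setLIntegral_congr_fun (measurableSet_S m ψ')
    hptw]
  rw [lintegral_const_mul _ (measurable_Hd t')]
  exact mul_le_mul_right (IH t' ht'mem) _

end P4

section P5
open CfAux MeasureTheory

lemma prod_fac_succ (ψ : ℕ → ℕ∞) (m : ℕ) :
    fac (ψ 1) * ∏ k ∈ Finset.Icc 1 m, fac (ψ (k+1)) =
      ∏ k ∈ Finset.Icc 1 (m+1), fac (ψ k) := by
  have h1 : ∏ k ∈ Finset.Icc 1 m, fac (ψ (k+1)) =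
      ∏ k ∈ Finset.Icc 2 (m+1), fac (ψ k) := by
    rw [show Finset.Icc 2 (m+1) = (Finset.Icc 1 m).image (· + 1) from by
      rw [Finset.image_add_right_Icc]]
    rw [Finset.prod_image (fun a _ b _ h => by omega)]
  rw [h1, show Finset.Icc 1 (m+1) = insert 1 (Finset.Icc 2 (m+1)) from by
    ext k; simp only [Finset.mem_insert, Finset.mem_Icc]; omega,
    Finset.prod_insert (show 1 ∉ Finset.Icc 2 (m+1) from by simp)]

lemma tsum_bound (ψ1 : ℕ∞) (Q : ENNReal) {t : ℝ} (ht0 : 0 ≤ t) :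
    ∑' c : ℕ, (if 1 ≤ c ∧ (c:ℕ∞) ≤ ψ1 then ENNReal.ofReal (lam t c) * Q else 0)
      ≤ fac ψ1 * Q := by
  classical
  have hsummand : ∀ c : ℕ, (if 1 ≤ c ∧ (c:ℕ∞) ≤ ψ1 then ENNReal.ofReal (lam t c) * Q else 0)
      = (if 1 ≤ c ∧ (c:ℕ∞) ≤ ψ1 then ENNReal.ofReal (lam t c) else 0) * Q := by
    intro c; split_ifs <;> simp
  rw [tsum_congr hsummand, ENNReal.tsum_mul_right]
  refine mul_le_mul_left ?_ Q
  rw [ENNReal.tsum_eq_iSup_sum]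
  apply iSup_le
  intro F
  set F' := F.filter (fun c : ℕ => 1 ≤ c ∧ (c:ℕ∞) ≤ ψ1) with hF'
  have hsum : ∑ c ∈ F, (if 1 ≤ c ∧ (c:ℕ∞) ≤ ψ1 then ENNReal.ofReal (lam t c) else 0)
      = ∑ c ∈ F', ENNReal.ofReal (lam t c) := by
    rw [hF', Finset.sum_filter]
  rw [hsum, ← ENNReal.ofReal_sum_of_nonneg (fun c _ => lam_nonneg ht0 c)]
  have hmem : ∀ c ∈ F', 1 ≤ c ∧ (c:ℕ∞) ≤ ψ1 := by
    intro c hc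
    exact (Finset.mem_filter.mp hc).2
  by_cases htop : ψ1 = ⊤
  · have : fac ψ1 = 1 := by rw [fac, if_pos htop]
    rw [this]
    apply ENNReal.ofReal_le_one.mpr
    have hsub : F' ⊆ Finset.Icc 1 (F'.sup id) := by
      intro c hc
      simp only [Finset.mem_Icc]
      exact ⟨(hmem c hc).1, Finset.le_sup (f := id) hc⟩
    refine le_trans (Finset.sum_le_sum_of_subset_of_nonneg hsub
      (fun c _ _ => lam_nonneg ht0 c)) ?_
    exact sum_lam_le_one ht0 _
  · have hfac : fac ψ1 = ENNReal.ofReal ((ψ1.toNat : ℝ) / (ψ1.toNat + 1)) := by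
      rw [fac, if_neg htop]
    rw [hfac]
    apply ENNReal.ofReal_le_ofReal
    have hsub : F' ⊆ Finset.Icc 1 ψ1.toNat := by
      intro c hc
      simp only [Finset.mem_Icc]
      refine ⟨(hmem c hc).1, ?_⟩
      have h2 := (hmem c hc).2
      have : ψ1 = (ψ1.toNat : ℕ∞) := (ENat.coe_toNat htop).symm
      rw [this] at h2
      exact_mod_cast h2
    refine le_trans (Finset.sum_le_sum_of_subset_of_nonneg hsub
      (fun c _ _ => lam_nonneg ht0 c)) ?_
    exact sum_lam_le ht0 _

lemma main_lemma (m : ℕ) : ∀ (ψ : ℕ → ℕ∞) {t : ℝ}, t ∈ Set.Icc (0:ℝ) 1 →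
    ∫⁻ y in S m ψ, Hd t y ≤ ∏ k ∈ Finset.Icc 1 m, fac (ψ k) := by
  induction m with
  | zero =>
    intro ψ t ht
    have : Finset.Icc 1 0 = (∅ : Finset ℕ) := by simp
    rw [this, Finset.prod_empty]
    calc ∫⁻ y in S 0 ψ, Hd t y ≤ ∫⁻ y in Set.Ioo (0:ℝ) 1, Hd t y :=
        lintegral_mono_set (S_subset_Ioo _ _)
      _ = 1 := lintegral_H_Ioo ht
  | succ m IH =>
    intro ψ t ht
    set ψ' : ℕ → ℕ∞ := fun k => ψ (k+1) with hψ'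
    set Q := ∏ k ∈ Finset.Icc 1 m, fac (ψ' k) with hQ
    calc ∫⁻ y in S (m+1) ψ, Hd t y
        ≤ ∫⁻ y in ⋃ c : ℕ, (if 1 ≤ c ∧ (c : ℕ∞) ≤ ψ 1 then
            (fun z : ℝ => ((c:ℝ) + z)⁻¹) '' S m ψ' else ∅), Hd t y :=
          lintegral_mono_set (S_decomp m ψ)
      _ ≤ ∑' c : ℕ, ∫⁻ y in (if 1 ≤ c ∧ (c : ℕ∞) ≤ ψ 1 then
            (fun z : ℝ => ((c:ℝ) + z)⁻¹) '' S m ψ' else ∅), Hd t y :=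
          lintegral_iUnion_le _ _
      _ ≤ ∑' c : ℕ, (if 1 ≤ c ∧ (c:ℕ∞) ≤ ψ 1 then ENNReal.ofReal (lam t c) * Q else 0) := by
          apply ENNReal.tsum_le_tsum
          intro c
          split_ifs with h
          · exact step_c m ψ' ht h.1 (fun t' ht' => IH ψ' ht')
          · simp
      _ ≤ fac (ψ 1) * Q := tsum_bound (ψ 1) Q ht.1
      _ = ∏ k ∈ Finset.Icc 1 (m+1), fac (ψ k) := prod_fac_succ ψ m

end P5

section P6
open CfAux MeasureTheory

theorem stmt2
    (φ : ℕ → ℕ∞) (hφ1 : φ 1 ≠ ⊤)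
    (hφinf : {k : ℕ | 1 ≤ k ∧ φ k ≠ ⊤}.Infinite)
    (a : ℕ → ℕ) (hamono : StrictMonoOn a (Set.Ici 1))
    (harange : ∀ j, 1 ≤ j → 1 ≤ a j ∧ φ (a j) ≠ ⊤)
    (haonto : ∀ k, 1 ≤ k → φ k ≠ ⊤ → ∃ j, 1 ≤ j ∧ a j = k)
    (n : ℕ) (hn : 1 ≤ n) :
    (volume {x : ℝ | x ∈ Set.Ioo (0 : ℝ) 1 ∧ Irrational x ∧
        ∀ k, 1 ≤ k → k ≤ a n → (cfCoeff x k : ℕ∞) ≤ φ k}).toReal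
      < ∏ j ∈ Finset.Icc 1 n, (1 - 1 / (3 * (((φ (a j)).toNat : ℝ) + 2))) := by
  classical
  have hset : {x : ℝ | x ∈ Set.Ioo (0 : ℝ) 1 ∧ Irrational x ∧
      ∀ k, 1 ≤ k → k ≤ a n → (cfCoeff x k : ℕ∞) ≤ φ k} = S (a n) φ := rfl
  -- Step 1: measure bound from the main lemma at t = 0
  have h0 : ∀ y : ℝ, Hd 0 y = 1 := by
    intro y; unfold Hd; norm_num
  have hvol : volume (S (a n) φ) ≤ ∏ k ∈ Finset.Icc 1 (a n), fac (φ k) := by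
    have hm := main_lemma (a n) φ (t := 0) (by norm_num)
    calc volume (S (a n) φ) = ∫⁻ y in S (a n) φ, 1 := (setLIntegral_one _).symm
      _ = ∫⁻ y in S (a n) φ, Hd 0 y := by simp [h0]
      _ ≤ _ := hm
  -- Step 2: reindex the product
  have hreindex : ∏ k ∈ Finset.Icc 1 (a n), fac (φ k) =
      ∏ j ∈ Finset.Icc 1 n, fac (φ (a j)) := by
    rw [← Finset.prod_filter_of_ne (p := fun k => φ k ≠ ⊤)
      (fun k _ hne => by
        intro htop
        apply hne
        rw [fac, if_pos htop])]
    refine (Finset.prod_bij (fun j _ => a j) ?_ ?_ ?_ ?_).symm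
    · intro j hj
      rw [Finset.mem_Icc] at hj
      simp only [Finset.mem_filter, Finset.mem_Icc]
      refine ⟨⟨(harange j hj.1).1, ?_⟩, (harange j hj.1).2⟩
      rcases eq_or_lt_of_le hj.2 with h | h
      · rw [h]
      · exact (hamono (Set.mem_Ici.mpr hj.1) (Set.mem_Ici.mpr hn) h).le
    · intro j1 hj1 j2 hj2 h
      rw [Finset.mem_Icc] at hj1 hj2
      exact hamono.injOn (Set.mem_Ici.mpr hj1.1) (Set.mem_Ici.mpr hj2.1) h
    · intro k hk
      simp only [Finset.mem_filter, Finset.mem_Icc] at hk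
      obtain ⟨⟨hk1, hkan⟩, hkne⟩ := hk
      obtain ⟨j, hj1, hjk⟩ := haonto k hk1 hkne
      refine ⟨j, Finset.mem_Icc.mpr ⟨hj1, ?_⟩, hjk⟩
      by_contra h
      push_neg at h
      have := hamono (Set.mem_Ici.mpr hn) (Set.mem_Ici.mpr hj1) h
      omega
    · intro j _
      rfl
  -- Step 3: pass to real numbers
  set P := ∏ j ∈ Finset.Icc 1 n, fac (φ (a j)) with hP
  have hfac_eq : ∀ j ∈ Finset.Icc 1 n, fac (φ (a j)) =
      ENNReal.ofReal (((φ (a j)).toNat : ℝ) / ((φ (a j)).toNat + 1)) := by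
    intro j hj
    rw [Finset.mem_Icc] at hj
    rw [fac, if_neg (harange j hj.1).2]
  have hPne : P ≠ ⊤ := by
    rw [hP]
    refine (ENNReal.prod_lt_top ?_).ne
    intro j hj
    rw [hfac_eq j hj]
    exact ENNReal.ofReal_lt_top
  have hle : (volume (S (a n) φ)).toReal ≤
      ∏ j ∈ Finset.Icc 1 n, (((φ (a j)).toNat : ℝ) / ((φ (a j)).toNat + 1)) := by
    have h1 : (volume (S (a n) φ)).toReal ≤ P.toReal :=
      ENNReal.toReal_mono hPne (hreindex ▸ hvol)
    refine h1.trans_eq ?_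
    rw [hP, ENNReal.toReal_prod]
    exact Finset.prod_congr rfl (fun j hj => by
      rw [hfac_eq j hj, ENNReal.toReal_ofReal (by positivity)])
  -- Step 4: strict comparison of the products
  have hstrict : ∏ j ∈ Finset.Icc 1 n, (((φ (a j)).toNat : ℝ) / ((φ (a j)).toNat + 1))
      < ∏ j ∈ Finset.Icc 1 n, (1 - 1 / (3 * (((φ (a j)).toNat : ℝ) + 2))) := by
    have hfactor_lt : ∀ j ∈ Finset.Icc 1 n,
        (((φ (a j)).toNat : ℝ) / ((φ (a j)).toNat + 1)) <
          1 - 1 / (3 * (((φ (a j)).toNat : ℝ) + 2)) := by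
      intro j _
      set x : ℝ := ((φ (a j)).toNat : ℝ) with hx
      have hx0 : 0 ≤ x := Nat.cast_nonneg _
      have h1 : x / (x + 1) = 1 - 1/(x+1) := by field_simp; ring
      rw [h1]
      have : 1 / (3 * (x + 2)) < 1/(x+1) := by
        apply div_lt_div_of_pos_left one_pos (by positivity)
        nlinarith
      linarith
    have hfactor_pos : ∀ j ∈ Finset.Icc 1 n,
        (0:ℝ) < 1 - 1 / (3 * (((φ (a j)).toNat : ℝ) + 2)) := by
      intro j _
      set x : ℝ := ((φ (a j)).toNat : ℝ) with hx
      have hx0 : 0 ≤ x := Nat.cast_nonneg _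
      have h2 : 1 / (3 * (x + 2)) ≤ 1/6 := by
        rw [div_le_div_iff₀ (by positivity) (by norm_num)]
        nlinarith
      linarith
    by_cases hz : ∃ j ∈ Finset.Icc 1 n, (φ (a j)).toNat = 0
    · obtain ⟨j0, hj0, hj0z⟩ := hz
      have hL : ∏ j ∈ Finset.Icc 1 n, (((φ (a j)).toNat : ℝ) / ((φ (a j)).toNat + 1)) = 0 :=
        Finset.prod_eq_zero hj0 (by rw [hj0z]; norm_num)
      rw [hL]
      exact Finset.prod_pos hfactor_pos
    · push_neg at hz
      apply Finset.prod_lt_prod_of_nonempty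
      · intro j hj
        have := hz j hj
        have h1 : (1:ℝ) ≤ ((φ (a j)).toNat : ℝ) := by
          exact_mod_cast Nat.one_le_iff_ne_zero.mpr this
        positivity
      · exact hfactor_lt
      · exact Finset.nonempty_Icc.mpr hn
  rw [hset]
  exact lt_of_le_of_lt hle hstrict

end P6
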